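/- Let Γ ⊂ P^2 be a reduced complete intersection of curves of degrees d_1, d_2 over F_q with s = d_1 + d_2 − 3, and suppose 0 ≤ a ≤ s. Assume that for every subset Γ' ⊆ Γ with |Γ'| = d_1 d_2 − s + a − 1, the projection C(Γ)_a → C(Γ')_a is injective. Then the minimum distance of C(Γ)_a satisfies d ≥ s − a + 2. -/

import Mathlib

open MvPolynomial

/-- Evaluation of homogeneous degree-`a` polynomials at fixed representatives of
`n` points of `ℙ^m`. -/
noncomputable def evalMap (K : Type) [Field K] (m n a : ℕ)
    (p : Fin n → Fin (m+1) → K) :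
    homogeneousSubmodule (Fin (m+1)) K a →ₗ[K] (Fin n → K) where
  toFun f i := eval (p i) (f : MvPolynomial (Fin (m+1)) K)
  map_add' f g := by ext i; simp
  map_smul' c f := by ext i; simp [smul_eval]

/-- The exchange argument: let `Γ ⊂ ℙ²` be a reduced complete intersection of
curves of degrees `d₁, d₂` over `𝔽_q`, `s = d₁ + d₂ - 3`, `0 ≤ a ≤ s`.  If the
projection `C(Γ)_a → C(Γ')_a` is injective for every `Γ' ⊆ Γ` with
`|Γ'| = d₁d₂ - s + a - 1`, then every nonzero codeword of `C(Γ)_a` has Hamming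
weight at least `s - a + 2`. -/
theorem stmt_15 (K : Type) [Field K] [Fintype K] [DecidableEq K]
    (d1 d2 a s n : ℕ)
    (hn : n = d1 * d2) (hs : s + 3 = d1 + d2) (ha : a ≤ s)
    (p : Fin n → Fin 3 → K)
    (hp0 : ∀ i, p i ≠ 0)
    (hdist : ∀ i j : Fin n, i ≠ j → ∀ c : K, p i ≠ c • p j)
    (F1 F2 : MvPolynomial (Fin 3) K)
    (hF1 : F1.IsHomogeneous d1) (hF2 : F2.IsHomogeneous d2)
    (hlocus : ∀ v : Fin 3 → K, v ≠ 0 →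
      ((eval v F1 = 0 ∧ eval v F2 = 0) ↔ ∃ (j : Fin n) (c : K), c ≠ 0 ∧ v = c • p j))
    (hinj : ∀ S : Finset (Fin n), (S.card : ℤ) = (d1 * d2 : ℤ) - s + a - 1 →
      ∀ w ∈ LinearMap.range (evalMap K 2 n a p), (∀ i ∈ S, w i = 0) → w = 0) :
    ∀ w ∈ LinearMap.range (evalMap K 2 n a p), w ≠ 0 → s - a + 2 ≤ hammingNorm w := by
  intro w hw hwne
  by_contra hlt
  push_neg at hlt
  -- n ≠ 0, hence d1, d2 ≥ 1
  have hn0 : n ≠ 0 := by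
    rintro rfl
    exact hwne (funext fun i => i.elim0)
  have hd1 : 1 ≤ d1 := by
    rcases Nat.eq_zero_or_pos d1 with h | h
    · subst h; simp at hn; omega
    · exact h
  have hd2 : 1 ≤ d2 := by
    rcases Nat.eq_zero_or_pos d2 with h | h
    · subst h; simp at hn; omega
    · exact h
  obtain ⟨x, hx⟩ := Nat.exists_eq_add_of_le hd1
  obtain ⟨y, hy⟩ := Nat.exists_eq_add_of_le hd2
  have hprod : n = 1 + x + y + x * y := by rw [hn, hx, hy]; ring
  have hsxy : s + 1 = x + y := by omega
  -- the zero set of w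
  classical
  set Z : Finset (Fin n) := Finset.univ.filter (fun i => w i = 0) with hZ
  have hcard : hammingNorm w + Z.card = n := by
    have := Finset.card_filter_add_card_filter_not
      (s := (Finset.univ : Finset (Fin n))) (p := fun i => w i ≠ 0)
    simpa [hammingNorm, hZ, Finset.card_univ] using this
  set k : ℕ := a + 1 + x * y with hk
  have hkZ : k ≤ Z.card := by omega
  obtain ⟨S, hSZ, hScard⟩ := Finset.exists_subset_card_eq hkZ
  have hScast : (S.card : ℤ) = (d1 * d2 : ℤ) - s + a - 1 := by
    have : (d1 * d2 : ℤ) = (n : ℤ) := by exact_mod_cast hn.symm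
    rw [hScard, this]
    have : (n : ℤ) = 1 + x + y + x * y := by exact_mod_cast hprod
    rw [this]
    have : (s : ℤ) + 1 = x + y := by exact_mod_cast hsxy
    push_cast [hk]
    omega
  have hvanish : ∀ i ∈ S, w i = 0 := fun i hi => by
    have := hSZ hi
    simpa [hZ] using this
  exact hwne (hinj S hScast w hw hvanish)
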